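/- For every x in [0,1], the integral of f over [x, 1 - x] equals 1/2 - x; that is, ∫_x^{1-x} f(t) dt = 1/2 - x. -/
import Mathlib


open intervalIntegral Set

theorem bourbaki_stmt (f : ℝ → ℝ)
    (hcont : ContinuousOn f (Set.Icc 0 1))
    (h0 : f 0 = 0) (h1 : f 1 = 1)
    (hw1 : ∀ x ∈ Set.Icc (0:ℝ) 1, f (x / 3) = (2/3) * f x)
    (hw2 : ∀ x ∈ Set.Icc (0:ℝ) 1, f ((2 - x) / 3) = (1/3) * (1 + f x))
    (hw3 : ∀ x ∈ Set.Icc (0:ℝ) 1, f ((2 + x) / 3) = 1/3 + (2/3) * f x) :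
    ∀ x ∈ Set.Icc (0:ℝ) 1, ∫ t in x..(1 - x), f t = 1/2 - x := by
  set g : ℝ → ℝ := fun x => f x + f (1 - x) - 1 with hg
  have hgcont : ContinuousOn g (Set.Icc 0 1) := by
    apply ContinuousOn.sub _ continuousOn_const
    exact hcont.add (hcont.comp (by fun_prop)
      (fun x hx => ⟨by linarith [hx.2], by linarith [hx.1]⟩))
  have key : ∀ y ∈ Set.Icc (0:ℝ) 1, ∃ x ∈ Set.Icc (0:ℝ) 1,
      g y = (2/3) * g x ∨ g y = (1/3) * g x := by
    intro y hy
    rcases le_or_gt y (1/3) with h | h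
    · refine ⟨3*y, ⟨by linarith [hy.1], by linarith⟩, Or.inl ?_⟩
      have e1 : f y = 2/3 * f (3*y) := by
        have := hw1 (3*y) ⟨by linarith [hy.1], by linarith⟩
        rw [show 3*y/3 = y by ring] at this; exact this
      have e2 : f (1 - y) = 1/3 + 2/3 * f (1 - 3*y) := by
        have := hw3 (1 - 3*y) ⟨by linarith, by linarith [hy.1]⟩
        rw [show (2 + (1 - 3*y))/3 = 1 - y by ring] at this; exact this
      simp only [hg]
      rw [e1, e2, show (1 : ℝ) - 3*y = 1 - 3*y from rfl]; ring
    · rcases le_or_gt y (2/3) with h2 | h2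
      · refine ⟨2 - 3*y, ⟨by linarith, by linarith⟩, Or.inr ?_⟩
        have e1 : f y = 1/3 * (1 + f (2 - 3*y)) := by
          have := hw2 (2 - 3*y) ⟨by linarith, by linarith⟩
          rw [show (2 - (2 - 3*y))/3 = y by ring] at this; exact this
        have e2 : f (1 - y) = 1/3 * (1 + f (1 - (2 - 3*y))) := by
          have := hw2 (3*y - 1) ⟨by linarith, by linarith⟩
          rw [show (2 - (3*y - 1))/3 = 1 - y by ring] at this
          rw [show (1 - (2 - 3*y)) = 3*y - 1 by ring]; exact this
        simp only [hg]; rw [e1, e2]; ring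
      · refine ⟨3*y - 2, ⟨by linarith, by linarith [hy.2]⟩, Or.inl ?_⟩
        have e1 : f y = 1/3 + 2/3 * f (3*y - 2) := by
          have := hw3 (3*y - 2) ⟨by linarith, by linarith [hy.2]⟩
          rw [show (2 + (3*y - 2))/3 = y by ring] at this; exact this
        have e2 : f (1 - y) = 2/3 * f (1 - (3*y - 2)) := by
          have := hw1 (3 - 3*y) ⟨by linarith [hy.2], by linarith⟩
          rw [show (3 - 3*y)/3 = 1 - y by ring] at this
          rw [show (1 - (3*y - 2)) = 3 - 3*y by ring]; exact this
        simp only [hg]; rw [e1, e2]; ring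
  have hgzero : ∀ y ∈ Set.Icc (0:ℝ) 1, g y = 0 := by
    obtain ⟨z, hz, hmax⟩ := (isCompact_Icc (a := (0:ℝ)) (b := 1)).exists_isMaxOn
      (Set.nonempty_Icc.2 zero_le_one) hgcont.abs
    have hM : ∀ y ∈ Set.Icc (0:ℝ) 1, |g y| ≤ |g z| := fun y hy => hmax hy
    obtain ⟨x, hx, hcase⟩ := key z hz
    have hz0 : |g z| = 0 := by
      have hxz : |g x| ≤ |g z| := hM x hx
      have hle : |g z| ≤ (2/3) * |g z| := by
        rcases hcase with h | h
        · have he : |g z| = 2/3 * |g x| := by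
            rw [h, abs_mul, show |(2/3 : ℝ)| = 2/3 by norm_num]
          linarith
        · have he : |g z| = 1/3 * |g x| := by
            rw [h, abs_mul, show |(1/3 : ℝ)| = 1/3 by norm_num]
          linarith
      linarith [abs_nonneg (g z)]
    intro y hy
    have := hM y hy
    rw [hz0] at this
    exact abs_eq_zero.mp (le_antisymm this (abs_nonneg _))
  intro x hx
  have hsub : Set.uIcc x (1 - x) ⊆ Set.Icc (0:ℝ) 1 :=
    Set.uIcc_subset_Icc hx ⟨by linarith [hx.2], by linarith [hx.1]⟩
  have hint : IntervalIntegrable f MeasureTheory.volume x (1 - x) :=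
    (hcont.mono hsub).intervalIntegrable
  have step1 : ∫ t in x..(1 - x), f (1 - t) = ∫ t in x..(1 - x), f t := by
    rw [intervalIntegral.integral_comp_sub_left f 1]
    norm_num
  have step2 : ∫ t in x..(1 - x), f (1 - t) = ∫ t in x..(1 - x), (1 - f t) := by
    apply intervalIntegral.integral_congr
    intro t ht
    have := hgzero t (hsub ht)
    simp only [hg] at this
    dsimp only
    linarith
  have step3 : ∫ t in x..(1 - x), (1 - f t) = (1 - 2*x) - ∫ t in x..(1 - x), f t := by
    rw [intervalIntegral.integral_sub intervalIntegrable_const hint]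
    simp
    ring
  linarith [step1, step2.symm.trans step1, step3]
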